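/- Let f : [0,∞) → ℝ be a continuous function that changes sign at most N−1 times in the interval (0,∞). If there exist N distinct real numbers p₁,…,p_N such that for every k = 1,…,N the function t ↦ t^{p_k} f(t) is (absolutely) integrable on (0,∞) and ∫₀^∞ t^{p_k} f(t) dt = 0, then f is identically equal to zero. -/

import Mathlib

open MeasureTheory Real Set Topology Filter

/-- A function `f` changes sign at most `N` times in `(0,∞)`: there exist points
`0 < t₁ ≤ ⋯ ≤ t_N` such that on each of the open intervals `(0,t₁), (t₁,t₂), …, (t_N,∞)`
the function does not take both strictly positive and strictly negative values.
(Two points `0 < x ≤ y` lie in a common such open interval iff no `tⱼ` belongs to `[x,y]`.) -/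
def ChangesSignAtMost (f : ℝ → ℝ) (N : ℕ) : Prop :=
  ∃ t : Fin N → ℝ, (∀ j, 0 < t j) ∧ Monotone t ∧
    ∀ x y : ℝ, 0 < x → x ≤ y → (∀ j, t j ∉ Set.Icc x y) →
      ¬(0 < f x ∧ f y < 0) ∧ ¬(f x < 0 ∧ 0 < f y)

def AltOn (f : ℝ → ℝ) (m : ℕ) (x : ℕ → ℝ) : Prop :=
  0 < x 0 ∧ StrictMono x ∧ ∀ i < m, f (x i) * f (x (i + 1)) < 0

lemma sign_helper {a b c d : ℝ} (h1 : 0 < a * b) (h2 : 0 < c * d) (h3 : b * d < 0) :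
    a * c < 0 := by nlinarith [mul_pos h1 h2]

lemma sign_helper2 {a b c : ℝ} (h1 : 0 < a * b) (h2 : c * b < 0) : a * c < 0 := by
  nlinarith [mul_neg_of_pos_of_neg h1 h2, sq_nonneg b]

lemma meas_rpow_const (c : ℝ) : Measurable fun x : ℝ => x ^ c := by measurability

lemma zero_at_zero {f : ℝ → ℝ} (hf : Continuous f) (h : ∀ t, 0 < t → f t = 0) : f 0 = 0 := by
  have h1 : Tendsto f (𝓝[>] (0 : ℝ)) (𝓝 (f 0)) :=
    (hf.continuousAt (x := (0:ℝ))).continuousWithinAt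
  have h2 : Tendsto f (𝓝[>] (0 : ℝ)) (𝓝 0) := by
    refine Tendsto.congr' ?_ tendsto_const_nhds
    filter_upwards [self_mem_nhdsWithin] with t ht
    exact (h t ht).symm
  exact tendsto_nhds_unique h1 h2

lemma zero_of_nonneg {f : ℝ → ℝ} (hf : Continuous f) {r : ℝ}
    (h0 : ∀ t ∈ Ioi (0 : ℝ), 0 ≤ f t)
    (hi : IntegrableOn (fun t : ℝ => t ^ r * f t) (Ioi 0) volume)
    (hz : ∫ t in Ioi (0 : ℝ), t ^ r * f t = 0) : ∀ x, 0 ≤ x → f x = 0 := by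
  have hnn : 0 ≤ᵐ[volume.restrict (Ioi (0:ℝ))] fun t => t ^ r * f t := by
    rw [EventuallyLE, ae_restrict_iff' measurableSet_Ioi]
    exact ae_of_all _ fun t ht => mul_nonneg (rpow_nonneg (le_of_lt ht) r) (h0 t ht)
  have hae : (fun t : ℝ => t ^ r * f t) =ᵐ[volume.restrict (Ioi (0:ℝ))] 0 :=
    (integral_eq_zero_iff_of_nonneg_ae hnn hi).mp hz
  have hae2 : ∀ᵐ t ∂(volume : Measure ℝ), t ∈ Ioi (0:ℝ) → t ^ r * f t = 0 := by
    rw [← ae_restrict_iff' measurableSet_Ioi]; exact hae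
  have hnull : volume {t : ℝ | ¬(t ∈ Ioi (0:ℝ) → t ^ r * f t = 0)} = 0 := hae2
  set U : Set ℝ := Ioi 0 ∩ f ⁻¹' ({0}ᶜ) with hU
  have hUopen : IsOpen U := isOpen_Ioi.inter (isOpen_compl_singleton.preimage hf)
  have hUnull : volume U = 0 := by
    refine measure_mono_null ?_ hnull
    intro u hu
    simp only [mem_setOf_eq, Classical.not_imp]
    refine ⟨hu.1, ?_⟩
    have hu2 : f u ≠ 0 := hu.2
    exact mul_ne_zero (ne_of_gt (rpow_pos_of_pos hu.1 r)) hu2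
  have hUe : U = ∅ := hUopen.eq_empty_of_measure_zero hUnull
  have hzero : ∀ t, 0 < t → f t = 0 := by
    intro t ht
    by_contra hne
    have : t ∈ U := ⟨ht, hne⟩
    simp [hUe] at this
  intro x hx
  rcases eq_or_lt_of_le hx with h | h
  · rw [← h]; exact zero_at_zero hf hzero
  · exact hzero x h

lemma key (N : ℕ) : ∀ f : ℝ → ℝ, Continuous f →
    (∀ x : ℕ → ℝ, ¬ AltOn f N x) →
    ∀ p : Fin N → ℝ, Function.Injective p →
    (∀ k, IntegrableOn (fun t : ℝ => t ^ (p k) * f t) (Set.Ioi 0) volume) →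
    (∀ k, ∫ t in Set.Ioi (0 : ℝ), t ^ (p k) * f t = 0) →
    ∀ x : ℝ, 0 ≤ x → f x = 0 := by
  induction N with
  | zero =>
    intro f _ hno _ _ _ _
    exfalso
    refine hno (fun i => (i : ℝ) + 1) ⟨by norm_num, ?_, fun i hi => absurd hi (Nat.not_lt_zero i)⟩
    exact strictMono_nat_of_lt_succ fun k => by push_cast; linarith
  | succ n ih =>
    intro f hf hno p hp hint hzero
    rcases Nat.eq_zero_or_pos n with hn | hn
    · -- base case N = 1
      subst hn
      have hchain : ∀ u v : ℝ, 0 < u → u < v → f u * f v < 0 → False := by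
        intro u v hu huv hprod
        have e0 : u + ((0:ℕ) : ℝ) * (v - u) = u := by push_cast; ring
        have e1 : u + (((0:ℕ) + 1 : ℕ) : ℝ) * (v - u) = v := by push_cast; ring
        refine hno (fun i => u + (i : ℝ) * (v - u)) ⟨by simpa using hu, ?_, ?_⟩
        · exact strictMono_nat_of_lt_succ fun k => by push_cast; nlinarith
        · intro i hi
          have : i = 0 := by omega
          subst this
          show f (u + ((0:ℕ) : ℝ) * (v - u)) * f (u + (((0:ℕ) + 1 : ℕ) : ℝ) * (v - u)) < 0
          rw [e0, e1]
          exact hprod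
      have hsc : (∀ t ∈ Ioi (0:ℝ), 0 ≤ f t) ∨ (∀ t ∈ Ioi (0:ℝ), f t ≤ 0) := by
        by_contra hcon
        push_neg at hcon
        obtain ⟨⟨a, ha, ha'⟩, ⟨b, hb, hb'⟩⟩ := hcon
        rcases lt_trichotomy a b with h | h | h
        · exact hchain a b ha h (by nlinarith)
        · rw [h] at ha'; linarith
        · exact hchain b a hb h (by nlinarith)
      rcases hsc with hpos | hneg
      · exact zero_of_nonneg hf hpos (hint 0) (hzero 0)
      · intro x hx
        have hneg' : ∀ t ∈ Ioi (0:ℝ), 0 ≤ -f t := fun t ht => neg_nonneg.mpr (hneg t ht)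
        have hi' : IntegrableOn (fun t : ℝ => t ^ (p 0) * (-f t)) (Ioi 0) volume := by
          refine IntegrableOn.congr_fun ((hint 0).neg) (fun t _ => ?_) measurableSet_Ioi
          simp only [Pi.neg_apply]
          ring
        have hz' : ∫ t in Ioi (0:ℝ), t ^ (p 0) * (-f t) = 0 := by
          have he : ∫ t in Ioi (0:ℝ), t ^ (p 0) * (-f t)
              = - ∫ t in Ioi (0:ℝ), t ^ (p 0) * f t := by
            rw [← integral_neg]
            exact setIntegral_congr_fun measurableSet_Ioi fun t _ => by ring
          rw [he, hzero 0, neg_zero]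
        have := zero_of_nonneg hf.neg hneg' hi' hz' x hx
        simpa using neg_eq_zero.mp this
    · -- inductive step, n ≥ 1
      obtain ⟨k0, hk0⟩ := Finite.exists_min p
      set r := p k0 with hr
      have hmin : ∀ k : Fin n, r < p (k0.succAbove k) := fun k =>
        lt_of_le_of_ne (hk0 _) (fun h => Fin.succAbove_ne k0 k (hp h.symm))
      set g : ℝ → ℝ := fun s => if 0 < s then s ^ r * f s else 0 with hgdef
      have hgmeas : Measurable g := by
        refine Measurable.ite measurableSet_Ioi ?_ measurable_const
        exact (meas_rpow_const r).mul hf.measurable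
      have hgIoi : ∀ s ∈ Ioi (0:ℝ), g s = s ^ r * f s := fun s hs => if_pos hs
      have hgint : Integrable g volume := by
        have h1 : IntegrableOn g (Ioi 0) volume :=
          (hint k0).congr_fun (fun s hs => (hgIoi s hs).symm) measurableSet_Ioi
        have h2 : IntegrableOn g (Iic 0) volume := by
          have h0 : IntegrableOn (fun _ : ℝ => (0:ℝ)) (Iic 0) volume := integrableOn_zero
          exact h0.congr_fun (fun t ht => (if_neg (not_lt.mpr ht)).symm) measurableSet_Iic
        have := h2.union h1
        rwa [Iic_union_Ioi, integrableOn_univ] at this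
      have hgzero : ∫ s in Ioi (0:ℝ), g s = 0 := by
        rw [setIntegral_congr_fun measurableSet_Ioi hgIoi]; exact hzero k0
      set G : ℝ → ℝ := fun u => ∫ s in (0:ℝ)..u, g s with hGdef
      have hGcont : Continuous G := hgint.continuous_primitive 0
      have hGderiv : ∀ t : ℝ, 0 < t → HasDerivAt G (g t) t := by
        intro t ht
        refine intervalIntegral.integral_hasDerivAt_right hgint.intervalIntegrable
          hgmeas.stronglyMeasurable.stronglyMeasurableAtFilter ?_
        have hev : (fun s : ℝ => s ^ r * f s) =ᶠ[𝓝 t] g :=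
          eventuallyEq_of_mem (isOpen_Ioi.mem_nhds ht) fun s hs => (hgIoi s hs).symm
        exact (((continuousAt_rpow_const t r (Or.inl (ne_of_gt ht)))).mul hf.continuousAt).congr hev
      have hGIoi : ∀ t : ℝ, 0 ≤ t → G t = - ∫ s in Ioi t, g s := by
        intro t ht
        have hu : Ioc 0 t ∪ Ioi t = Ioi (0:ℝ) := Ioc_union_Ioi_eq_Ioi ht
        have hsplit : ∫ s in Ioi (0:ℝ), g s = (∫ s in Ioc 0 t, g s) + ∫ s in Ioi t, g s := by
          rw [← hu]
          exact setIntegral_union (Ioc_disjoint_Ioi le_rfl) measurableSet_Ioi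
            hgint.integrableOn hgint.integrableOn
        have hGt : G t = ∫ s in Ioc 0 t, g s := intervalIntegral.integral_of_le ht
        rw [hgzero] at hsplit
        rw [hGt]; linarith
      have hGsmall : ∀ a : ℝ, ∀ ε : ℝ, 0 < ε → ∃ b, a < b ∧ |G b| < ε := by
        intro a ε hε
        have habs : Integrable (fun s => |g s|) volume := hgint.abs
        have hU : ⋃ i : ℕ, Iic (i : ℝ) = univ := by
          refine eq_univ_of_forall fun z => mem_iUnion.mpr ?_
          obtain ⟨i, hi⟩ := exists_nat_ge z
          exact ⟨i, hi⟩
        have htend : Tendsto (fun i : ℕ => ∫ s in Iic (i:ℝ), |g s|) atTop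
            (𝓝 (∫ s in ⋃ i : ℕ, Iic (i:ℝ), |g s|)) :=
          tendsto_setIntegral_of_monotone (fun i => measurableSet_Iic)
            (fun i j hij => Iic_subset_Iic.mpr (by exact_mod_cast hij))
            (by rw [hU]; exact habs.integrableOn)
        rw [hU] at htend
        simp only [Measure.restrict_univ] at htend
        have h1 : ∀ᶠ i : ℕ in atTop, (∫ s, |g s|) - ε < ∫ s in Iic (i:ℝ), |g s| :=
          htend.eventually (eventually_gt_nhds (by linarith))
        have h2 : ∀ᶠ i : ℕ in atTop, a < (i : ℝ) :=
          tendsto_natCast_atTop_atTop.eventually_gt_atTop a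
        obtain ⟨i, hi1, hi2⟩ := (h1.and h2).exists
        have hsplit := integral_add_compl (measurableSet_Iic (a := (i:ℝ))) habs
        rw [compl_Iic] at hsplit
        have hI : ∫ s in Ioi (i:ℝ), |g s| < ε := by linarith
        refine ⟨(i:ℝ), hi2, ?_⟩
        have hGi : G i = - ∫ s in Ioi (i:ℝ), g s := hGIoi i (Nat.cast_nonneg i)
        rw [hGi, abs_neg]
        calc |∫ s in Ioi (i:ℝ), g s| ≤ ∫ s in Ioi (i:ℝ), |g s| := by
              simpa [Real.norm_eq_abs] using
                norm_integral_le_integral_norm (μ := volume.restrict (Ioi (i:ℝ))) g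
          _ < ε := hI
      -- no alternating chain of length n for G
      have hnoG : ∀ x : ℕ → ℝ, ¬ AltOn G n x := by
        intro x hxalt
        obtain ⟨hx0, hxm, hxa⟩ := hxalt
        have hxpos : ∀ i, 0 < x i := fun i => lt_of_lt_of_le hx0 (hxm.monotone (Nat.zero_le i))
        have hvne : ∀ i ≤ n, G (x i) ≠ 0 := by
          intro i hi h0
          rcases Nat.lt_or_ge i n with h | h
          · have := hxa i h; rw [h0] at this; simp at this
          · have hin : i = n := le_antisymm hi h
            subst hin
            have h2 := hxa (i - 1) (by omega)
            have he : i - 1 + 1 = i := by omega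
            rw [he, h0] at h2; simp at h2
        have hG00 : G 0 = 0 := intervalIntegral.integral_same
        obtain ⟨c0, hc0mem, hc0⟩ := exists_hasDerivAt_eq_slope G g hx0 hGcont.continuousOn
          (fun z hz => hGderiv z hz.1)
        have hmida : ∀ i : ℕ, ∃ c, i < n → c ∈ Ioo (x i) (x (i+1)) ∧
            g c = (G (x (i+1)) - G (x i)) / (x (i+1) - x i) := by
          intro i
          by_cases hi : i < n
          · obtain ⟨c, hcmem, hcv⟩ := exists_hasDerivAt_eq_slope G g (hxm (Nat.lt_succ_self i))
              hGcont.continuousOn (fun z hz => hGderiv z (lt_trans (hxpos i) hz.1))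
            exact ⟨c, fun _ => ⟨hcmem, hcv⟩⟩
          · exact ⟨0, fun h => absurd h hi⟩
        choose cm hcm using hmida
        obtain ⟨b, hbgt, hbsmall⟩ := hGsmall (x n) (|G (x n)|) (abs_pos.mpr (hvne n le_rfl))
        obtain ⟨cl, hclmem, hclv⟩ := exists_hasDerivAt_eq_slope G g hbgt hGcont.continuousOn
          (fun z hz => hGderiv z (lt_trans (hxpos n) hz.1))
        set c : ℕ → ℝ := fun i => if i = 0 then c0 else if i ≤ n then cm (i-1)
          else cl + ((i - (n+1) : ℕ) : ℝ) with hcdef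
        have hc0' : c 0 = c0 := by simp [hcdef]
        have hcmid : ∀ i, 1 ≤ i → i ≤ n → c i = cm (i-1) := by
          intro i h1 h2; simp [hcdef, Nat.pos_iff_ne_zero.mp h1, h2]
        have hclast : c (n+1) = cl := by
          simp [hcdef, Nat.succ_ne_zero]
        have hctail : ∀ i, n + 1 ≤ i → c i = cl + ((i - (n+1) : ℕ) : ℝ) := by
          intro i hi
          have h1 : i ≠ 0 := by omega
          by_cases h2 : i ≤ n
          · omega
          · simp [hcdef, h1, h2]
        -- strict monotonicity
        have hcmono : StrictMono c := by
          refine strictMono_nat_of_lt_succ fun i => ?_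
          rcases Nat.eq_zero_or_pos i with h0 | h0
          · subst h0
            rw [hc0', hcmid 1 le_rfl hn]
            exact lt_trans hc0mem.2 ((hcm 0 hn).1).1
          · by_cases h1 : i + 1 ≤ n
            · rw [hcmid i h0 (by omega), hcmid (i+1) (by omega) h1]
              have ha := (hcm (i-1) (by omega)).1
              have hb := (hcm i (by omega)).1
              have he : i - 1 + 1 = i := by omega
              rw [he] at ha
              exact lt_trans ha.2 hb.1
            · by_cases h2 : i ≤ n
              · have hin : i = n := by omega
                subst hin
                rw [hcmid i h0 le_rfl, hclast]
                have ha := (hcm (i-1) (by omega)).1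
                have he : i - 1 + 1 = i := by omega
                rw [he] at ha
                exact lt_trans ha.2 hclmem.1
              · rw [hctail i (by omega), hctail (i+1) (by omega)]
                have : ((i - (n+1) : ℕ) : ℝ) < ((i + 1 - (n+1) : ℕ) : ℝ) := by
                  exact_mod_cast Nat.sub_lt_sub_right (by omega) (by omega)
                linarith
        have hcpos : ∀ i, 0 < c i := fun i =>
          lt_of_lt_of_le (hc0' ▸ hc0mem.1) (hcmono.monotone (Nat.zero_le i))
        -- sign facts
        have hw0 : 0 < g (c 0) * G (x 0) := by
          rw [hc0']
          have he : g c0 * G (x 0) = G (x 0)^2 / x 0 := by rw [hc0, hG00]; ring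
          rw [he]
          refine div_pos ?_ hx0
          rw [← sq_abs]
          exact pow_pos (abs_pos.mpr (hvne 0 (Nat.zero_le n))) 2
        have hwmid : ∀ i ≤ n, 0 < g (c i) * G (x i) := by
          intro i hi
          rcases Nat.eq_zero_or_pos i with h0 | h0
          · subst h0; exact hw0
          · rw [hcmid i h0 hi]
            have hi1 : i - 1 < n := by omega
            have he : i - 1 + 1 = i := by omega
            have hv := hcm (i-1) hi1
            have hΔ : 0 < x ((i-1)+1) - x (i-1) := sub_pos.mpr (hxm (Nat.lt_succ_self _))
            have heq : g (cm (i-1)) * G (x ((i-1)+1)) =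
                (G (x ((i-1)+1))^2 - G (x (i-1)) * G (x ((i-1)+1))) / (x ((i-1)+1) - x (i-1)) := by
              rw [hv.2]; ring
            have hprod := hxa (i-1) hi1
            have : 0 < g (cm (i-1)) * G (x ((i-1)+1)) := by
              rw [heq]
              exact div_pos (by nlinarith [sq_nonneg (G (x ((i-1)+1)))]) hΔ
            rwa [he] at this
        have hwlast : g (c (n+1)) * G (x n) < 0 := by
          rw [hclast]
          have hΔ : 0 < b - x n := sub_pos.mpr hbgt
          have heq : g cl * G (x n) = (G b * G (x n) - G (x n)^2) / (b - x n) := by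
            rw [hclv]; ring
          rw [heq]
          refine div_neg_of_neg_of_pos ?_ hΔ
          have h1 : G b * G (x n) ≤ |G b| * |G (x n)| := by
            rw [← abs_mul]; exact le_abs_self _
          have h2 : |G b| * |G (x n)| < |G (x n)| * |G (x n)| :=
            mul_lt_mul_of_pos_right hbsmall (abs_pos.mpr (hvne n le_rfl))
          have h3 : |G (x n)| * |G (x n)| = G (x n)^2 := by
            rw [abs_mul_abs_self]; ring
          linarith
        -- g products alternate
        have hgpair : ∀ i < n + 1, g (c i) * g (c (i+1)) < 0 := by
          intro i hi
          rcases Nat.lt_or_ge i n with h | h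
          · exact sign_helper (hwmid i (le_of_lt h)) (hwmid (i+1) h) (hxa i h)
          · have hin : i = n := by omega
            subst hin
            exact sign_helper2 (hwmid i le_rfl) hwlast
        -- transfer to f
        have hfpair : ∀ i < n + 1, f (c i) * f (c (i+1)) < 0 := by
          intro i hi
          have hg1 : g (c i) = (c i) ^ r * f (c i) := if_pos (hcpos i)
          have hg2 : g (c (i+1)) = (c (i+1)) ^ r * f (c (i+1)) := if_pos (hcpos (i+1))
          have h := hgpair i hi
          rw [hg1, hg2] at h
          nlinarith [rpow_pos_of_pos (hcpos i) r, rpow_pos_of_pos (hcpos (i+1)) r,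
            mul_pos (rpow_pos_of_pos (hcpos i) r) (rpow_pos_of_pos (hcpos (i+1)) r)]
        exact hno c ⟨hcpos 0, hcmono, hfpair⟩
      -- moments of G vanish
      have hmom : ∀ k : Fin n,
          IntegrableOn (fun t : ℝ => t ^ (p (k0.succAbove k) - r - 1) * G t) (Ioi 0) volume ∧
          ∫ t in Ioi (0:ℝ), t ^ (p (k0.succAbove k) - r - 1) * G t = 0 := by
        intro k
        set j : Fin (n+1) := k0.succAbove k with hjdef
        set qk : ℝ := p j - r - 1 with hqkdef
        have hqk : -1 < qk := by have := hmin k; rw [hqkdef]; simp only [hjdef]; linarith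
        have hqk1 : 0 < qk + 1 := by linarith
        have hsum : qk + 1 + r = p j := by rw [hqkdef]; ring
        set μ : Measure ℝ := volume.restrict (Ioi 0) with hμdef
        set F2 : ℝ → ℝ → ℝ := fun t s => if t < s then t ^ qk * g s else 0 with hF2def
        have hF2meas : AEStronglyMeasurable (Function.uncurry F2) (μ.prod μ) := by
          have hm : Measurable (Function.uncurry F2) := by
            show Measurable fun z : ℝ × ℝ => if z.1 < z.2 then z.1 ^ qk * g z.2 else 0
            exact Measurable.ite (measurableSet_lt measurable_fst measurable_snd)
              (((meas_rpow_const qk).comp measurable_fst).mul (hgmeas.comp measurable_snd))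
              measurable_const
          exact hm.aestronglyMeasurable
        have hrpow_int : ∀ s : ℝ, IntegrableOn (fun t : ℝ => t ^ qk) (Ioo 0 s) volume := by
          intro s
          have hbase : IntegrableOn (fun t : ℝ => t ^ qk) (Ioc 0 (max s 0)) volume :=
            (intervalIntegral.intervalIntegrable_rpow' hqk).1
          refine hbase.mono_set fun t ht => ?_
          exact ⟨ht.1, le_trans (le_of_lt ht.2) (le_max_left _ _)⟩
        have hres : ∀ s : ℝ, μ.restrict (Iio s) = volume.restrict (Ioo 0 s) := by
          intro s
          rw [hμdef, Measure.restrict_restrict measurableSet_Iio, Iio_inter_Ioi]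
        have hsec : ∀ s : ℝ, Integrable (fun t => F2 t s) μ := by
          intro s
          have he : (fun t => F2 t s) = (Iio s).indicator (fun t => t ^ qk * g s) := by
            funext t; simp [hF2def, Set.indicator_apply, mem_Iio]
          rw [he, integrable_indicator_iff measurableSet_Iio]
          show Integrable _ (μ.restrict (Iio s))
          rw [hres s]
          exact (hrpow_int s).mul_const (g s)
        have hIoo_val : ∀ s : ℝ, 0 < s → ∫ t in Ioo (0:ℝ) s, t ^ qk = s ^ (qk+1)/(qk+1) := by
          intro s hs
          rw [← integral_Ioc_eq_integral_Ioo, ← intervalIntegral.integral_of_le (le_of_lt hs),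
            integral_rpow (Or.inl hqk)]
          rw [Real.zero_rpow (by linarith : qk + 1 ≠ 0)]
          ring
        have hnval : ∀ s ∈ Ioi (0:ℝ), ∫ t, ‖F2 t s‖ ∂μ = s ^ (qk+1)/(qk+1) * |g s| := by
          intro s hs
          have e1 : (fun t => ‖F2 t s‖) = (Iio s).indicator (fun t => ‖t ^ qk * g s‖) := by
            funext t
            by_cases h : t < s
            · simp [hF2def, Set.indicator_apply, mem_Iio, h]
            · simp [hF2def, Set.indicator_apply, mem_Iio, h]
          rw [e1, integral_indicator measurableSet_Iio, hres s]
          have e2 : ∀ t ∈ Ioo (0:ℝ) s, ‖t ^ qk * g s‖ = t ^ qk * |g s| := by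
            intro t ht
            rw [norm_mul, Real.norm_eq_abs, Real.norm_eq_abs,
              abs_of_pos (rpow_pos_of_pos ht.1 qk)]
          rw [setIntegral_congr_fun measurableSet_Ioo e2, integral_mul_const, hIoo_val s hs]
        have hmaj : Integrable (fun s => ∫ t, ‖F2 t s‖ ∂μ) μ := by
          have h1 : IntegrableOn (fun s : ℝ => (qk+1)⁻¹ * |s ^ (p j) * f s|) (Ioi 0) volume :=
            (hint j).abs.const_mul _
          have h2 : IntegrableOn (fun s : ℝ => s ^ (qk+1)/(qk+1) * |g s|) (Ioi 0) volume := by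
            refine h1.congr_fun (fun s hs => ?_) measurableSet_Ioi
            beta_reduce
            rw [hgIoi s hs, ← hsum, Real.rpow_add hs (qk+1) r, abs_mul, abs_mul, abs_mul,
              abs_of_pos (rpow_pos_of_pos hs (qk+1)), abs_of_pos (rpow_pos_of_pos hs r)]
            ring
          exact h2.congr_fun (fun s hs => (hnval s hs).symm) measurableSet_Ioi
        have hFint : Integrable (Function.uncurry F2) (μ.prod μ) :=
          (integrable_prod_iff' hF2meas).mpr ⟨ae_of_all _ hsec, hmaj⟩
        have hinner : ∀ t ∈ Ioi (0:ℝ), ∫ s, F2 t s ∂μ = t ^ qk * (- G t) := by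
          intro t ht
          have e1 : (fun s => F2 t s) = (Ioi t).indicator (fun s => t ^ qk * g s) := by
            funext s
            by_cases h : t < s
            · simp [hF2def, Set.indicator_apply, mem_Ioi, h]
            · simp [hF2def, Set.indicator_apply, mem_Ioi, h]
          have hres2 : μ.restrict (Ioi t) = volume.restrict (Ioi t) := by
            rw [hμdef, Measure.restrict_restrict measurableSet_Ioi, Ioi_inter_Ioi,
              sup_eq_left.mpr (le_of_lt ht)]
          rw [e1, integral_indicator measurableSet_Ioi, hres2, integral_const_mul,
            hGIoi t (le_of_lt ht), neg_neg]
        have houter : ∀ s ∈ Ioi (0:ℝ), ∫ t, F2 t s ∂μ = (qk+1)⁻¹ * (s ^ (p j) * f s) := by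
          intro s hs
          have e1 : (fun t => F2 t s) = (Iio s).indicator (fun t => t ^ qk * g s) := by
            funext t
            by_cases h : t < s
            · simp [hF2def, Set.indicator_apply, mem_Iio, h]
            · simp [hF2def, Set.indicator_apply, mem_Iio, h]
          rw [e1, integral_indicator measurableSet_Iio, hres s, integral_mul_const,
            hIoo_val s hs, hgIoi s hs]
          have hps : s ^ (p j) = s ^ (qk+1) * s ^ r := by rw [← hsum, Real.rpow_add hs]
          rw [hps]; ring
        have hswap := integral_integral_swap hFint
        have hR : ∫ s, (∫ t, F2 t s ∂μ) ∂μ = 0 := by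
          rw [hμdef, setIntegral_congr_fun measurableSet_Ioi houter, integral_const_mul,
            hzero j, mul_zero]
        have hL : ∫ t, (∫ s, F2 t s ∂μ) ∂μ = - ∫ t in Ioi (0:ℝ), t ^ qk * G t := by
          rw [hμdef, setIntegral_congr_fun measurableSet_Ioi hinner, ← integral_neg]
          exact setIntegral_congr_fun measurableSet_Ioi fun t _ => by ring
        have hGint : IntegrableOn (fun t : ℝ => t ^ qk * G t) (Ioi 0) volume := by
          have h1 : Integrable (fun t => ∫ s, F2 t s ∂μ) μ := hFint.integral_prod_left
          have h2 : IntegrableOn (fun t : ℝ => t ^ qk * (- G t)) (Ioi 0) volume :=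
            IntegrableOn.congr_fun h1 hinner measurableSet_Ioi
          refine IntegrableOn.congr_fun h2.neg (fun t _ => ?_) measurableSet_Ioi
          simp only [Pi.neg_apply]; ring
        have hGzero : ∫ t in Ioi (0:ℝ), t ^ qk * G t = 0 := by
          rw [hswap, hR] at hL
          linarith
        exact ⟨hGint, hGzero⟩
      set q : Fin n → ℝ := fun k => p (k0.succAbove k) - r - 1 with hqdef
      have hqinj : Function.Injective q := by
        intro a b h
        have h2 : p (k0.succAbove a) = p (k0.succAbove b) := by
          simp only [hqdef] at h; linarith
        exact Fin.succAbove_right_injective (hp h2)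
      have hG0' : ∀ y : ℝ, 0 ≤ y → G y = 0 :=
        ih G hGcont hnoG q hqinj (fun k => (hmom k).1) (fun k => (hmom k).2)
      have hfpos : ∀ t : ℝ, 0 < t → f t = 0 := by
        intro t ht
        have h1 : HasDerivAt G (g t) t := hGderiv t ht
        have hev : G =ᶠ[𝓝 t] fun _ => (0:ℝ) :=
          eventuallyEq_of_mem (isOpen_Ioi.mem_nhds ht) fun z hz => hG0' z (le_of_lt hz)
        have h2 : HasDerivAt G (0:ℝ) t := (hasDerivAt_const t (0:ℝ)).congr_of_eventuallyEq hev
        have h3 : g t = 0 := h1.unique h2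
        rw [hgIoi t ht] at h3
        rcases mul_eq_zero.mp h3 with h | h
        · exact absurd h (ne_of_gt (rpow_pos_of_pos ht r))
        · exact h
      intro x hx
      rcases eq_or_lt_of_le hx with h | h
      · rw [← h]; exact zero_at_zero hf hfpos
      · exact hfpos x h

lemma no_altOn_of_changesSign {f : ℝ → ℝ} {M : ℕ}
    (hf : ContinuousOn f (Set.Ici 0)) (hs : ChangesSignAtMost f M) :
    ∀ x, ¬ AltOn f (M + 1) x := by
  intro x hx
  obtain ⟨t, _htpos, _htmono, ht⟩ := hs
  obtain ⟨hx0, hxm, hxa⟩ := hx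
  have hxpos : ∀ i, 0 < x i := fun i => lt_of_lt_of_le hx0 (hxm.monotone (Nat.zero_le i))
  have hne : ∀ i ≤ M + 1, f (x i) ≠ 0 := by
    intro i hi h0
    rcases Nat.lt_or_ge i (M + 1) with h | h
    · have := hxa i h; rw [h0] at this; simp at this
    · have hiM : i = M + 1 := le_antisymm hi h
      have := hxa M (Nat.lt_succ_self M)
      rw [← hiM, h0] at this; simp at this
  -- sign-stability radii
  have hδ : ∀ i, ∃ d, 0 < d ∧ (i ≤ M + 1 → ∀ z, |z - x i| < d → 0 < f z * f (x i)) := by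
    intro i
    by_cases hi : i ≤ M + 1
    · have hci : ContinuousAt f (x i) := hf.continuousAt (Ici_mem_nhds (hxpos i))
      have hfi := hne i hi
      obtain ⟨d, hd, hball⟩ := Metric.continuousAt_iff.mp hci (|f (x i)|) (abs_pos.mpr hfi)
      refine ⟨d, hd, fun _ z hz => ?_⟩
      have h2 := hball (by simpa [Real.dist_eq] using hz)
      rw [Real.dist_eq] at h2
      rcases abs_lt.mp h2 with ⟨hl, hr⟩
      rcases abs_cases (f (x i)) with ⟨he, h0⟩ | ⟨he, h0⟩ <;> rw [he] at hl hr <;> nlinarith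
    · exact ⟨1, one_pos, fun h => absurd h hi⟩
  choose δ hδpos hδsign using hδ
  -- perturbed points avoiding range t
  set m : ℕ → ℝ := fun i => if i = 0 then max (x 0 - δ 0) 0 else max (x i - δ i) (x (i - 1)) with hm
  have hmlt : ∀ i, m i < x i := by
    intro i
    rcases Nat.eq_zero_or_pos i with h0 | h0
    · subst h0; simp only [hm, if_pos rfl]
      exact max_lt (by linarith [hδpos 0]) (hxpos 0)
    · simp only [hm, if_neg (Nat.pos_iff_ne_zero.mp h0)]
      exact max_lt (by linarith [hδpos i]) (hxm (Nat.sub_lt h0 one_pos))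
  have hy : ∀ i, ∃ z, z ∈ Set.Ioo (m i) (x i) ∧ z ∉ Set.range t := by
    intro i
    have : ((Set.Ioo (m i) (x i)) \ Set.range t).Nonempty :=
      ((Set.Ioo_infinite (hmlt i)).diff (Set.finite_range t)).nonempty
    obtain ⟨z, hz1, hz2⟩ := this
    exact ⟨z, hz1, hz2⟩
  choose Y hYmem hYt using hy
  have hYlt : ∀ i, Y i < x i := fun i => (hYmem i).2
  have hYgt : ∀ i, 0 < i → x (i - 1) < Y i := by
    intro i hi
    have := (hYmem i).1
    simp only [hm, if_neg (Nat.pos_iff_ne_zero.mp hi)] at this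
    exact lt_of_le_of_lt (le_max_right _ _) this
  have hYpos : ∀ i, 0 < Y i := by
    intro i
    rcases Nat.eq_zero_or_pos i with h0 | h0
    · subst h0
      have := (hYmem 0).1
      simp only [hm, if_pos rfl] at this
      exact lt_of_le_of_lt (le_max_right _ _) this
    · exact lt_trans (hxpos (i - 1)) (hYgt i h0)
  have hYsucc : ∀ i, Y i < Y (i + 1) := fun i =>
    lt_trans (hYlt i) (by simpa using hYgt (i + 1) (Nat.succ_pos i))
  have hYmono : ∀ a b : ℕ, a ≤ b → Y a ≤ Y b := by
    intro a b hab
    induction b with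
    | zero => simp_all
    | succ k ihk =>
      rcases Nat.lt_or_ge a (k + 1) with h | h
      · exact le_trans (ihk (Nat.lt_succ_iff.mp h)) (le_of_lt (hYsucc k))
      · have : a = k + 1 := le_antisymm hab h
        simp [this]
  have hYsign : ∀ i ≤ M + 1, 0 < f (Y i) * f (x i) := by
    intro i hi
    refine hδsign i hi (Y i) ?_
    have h1 := hYlt i
    have h2 : x i - δ i < Y i := by
      rcases Nat.eq_zero_or_pos i with h0 | h0
      · subst h0
        have := (hYmem 0).1; simp only [hm, if_pos rfl] at this
        exact lt_of_le_of_lt (le_max_left _ _) this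
      · have := (hYmem i).1; simp only [hm, if_neg (Nat.pos_iff_ne_zero.mp h0)] at this
        exact lt_of_le_of_lt (le_max_left _ _) this
    rw [abs_lt]; constructor <;> linarith
  have hYalt : ∀ i < M + 1, f (Y i) * f (Y (i + 1)) < 0 := fun i hi =>
    sign_helper (hYsign i (le_of_lt hi)) (hYsign (i + 1) hi) (hxa i hi)
  -- each pair must contain some t j
  have hJ : ∀ i : Fin (M + 1), ∃ j : Fin M, t j ∈ Set.Icc (Y i) (Y (i + 1)) := by
    intro i
    by_contra hcon
    push_neg at hcon
    have hcc := ht (Y i) (Y (i + 1)) (hYpos i) (le_of_lt (hYsucc i))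
      (fun j => hcon j)
    have := hYalt i i.isLt
    rcases mul_neg_iff.mp this with ⟨h1, h2⟩ | ⟨h1, h2⟩
    · exact hcc.1 ⟨h1, h2⟩
    · exact hcc.2 ⟨h1, h2⟩
  choose J hJmem using hJ
  have hJinj : Function.Injective J := by
    have key : ∀ i i' : Fin (M + 1), (i : ℕ) < i' → J i = J i' → False := by
      intro i i' hlt heq
      have h1 : t (J i) ≤ Y ((i : ℕ) + 1) := (hJmem i).2
      have h2 : Y (i' : ℕ) ≤ t (J i') := (hJmem i').1
      rw [← heq] at h2
      have h3 : Y ((i : ℕ) + 1) ≤ Y (i' : ℕ) := hYmono _ _ hlt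
      have : t (J i) = Y (i' : ℕ) := le_antisymm (le_trans h1 h3) h2
      exact hYt (i' : ℕ) ⟨J i, this⟩
    intro i i' heq
    by_contra hne'
    rcases lt_or_gt_of_ne (fun h => hne' h) with h | h
    · exact key i i' (Fin.lt_iff_val_lt_val.mp h) heq
    · exact key i' i (Fin.lt_iff_val_lt_val.mp h) heq.symm
  have := Fintype.card_le_of_injective J hJinj
  simp only [Fintype.card_fin] at this
  omega

/-- **Moment lemma.** If a continuous `f : [0,∞) → ℝ` changes sign at most `N-1` times in
`(0,∞)` and `∫₀^∞ t^{p_k} f(t) dt = 0` for `N` distinct real exponents `p₁,…,p_N`, then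
`f ≡ 0`. -/
theorem moment_lemma
    (N : ℕ) (hN : 0 < N) (f : ℝ → ℝ)
    (hf : ContinuousOn f (Set.Ici 0))
    (hsign : ChangesSignAtMost f (N - 1))
    (p : Fin N → ℝ) (hp : Function.Injective p)
    (hint : ∀ k, IntegrableOn (fun t : ℝ => t ^ (p k) * f t) (Set.Ioi 0) volume)
    (hzero : ∀ k, ∫ t in Set.Ioi (0 : ℝ), t ^ (p k) * f t = 0) :
    ∀ x : ℝ, 0 ≤ x → f x = 0 := by
  intro x hx
  have hnoF : ∀ y : ℕ → ℝ, ¬ AltOn f N y := by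
    have h := no_altOn_of_changesSign hf hsign
    have he : N - 1 + 1 = N := Nat.succ_pred_eq_of_pos hN
    rwa [he] at h
  set fc : ℝ → ℝ := fun s => f (max s 0) with hfcdef
  have hfcc : Continuous fc :=
    hf.comp_continuous (continuous_id.max continuous_const) (fun s => le_max_right s 0)
  have hfceq : ∀ t : ℝ, 0 ≤ t → fc t = f t := fun t ht => by
    rw [hfcdef]; simp [max_eq_left ht]
  have hno : ∀ y : ℕ → ℝ, ¬ AltOn fc N y := by
    intro y hy
    obtain ⟨hy0, hym, hya⟩ := hy
    have hypos : ∀ i, 0 < y i := fun i => lt_of_lt_of_le hy0 (hym.monotone (Nat.zero_le i))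
    refine hnoF y ⟨hy0, hym, fun i hi => ?_⟩
    have h := hya i hi
    rwa [hfceq _ (le_of_lt (hypos i)), hfceq _ (le_of_lt (hypos (i+1)))] at h
  have hint' : ∀ k, IntegrableOn (fun t : ℝ => t ^ (p k) * fc t) (Set.Ioi 0) volume := fun k =>
    (hint k).congr_fun (fun t ht => by rw [hfceq t (le_of_lt ht)]) measurableSet_Ioi
  have hzero' : ∀ k, ∫ t in Set.Ioi (0 : ℝ), t ^ (p k) * fc t = 0 := by
    intro k
    have he : ∫ t in Set.Ioi (0 : ℝ), t ^ (p k) * fc t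
        = ∫ t in Set.Ioi (0 : ℝ), t ^ (p k) * f t := by
      apply setIntegral_congr_fun measurableSet_Ioi
      intro t ht
      show t ^ (p k) * fc t = t ^ (p k) * f t
      rw [hfceq t (le_of_lt ht)]
    rw [he]
    exact hzero k
  have h := key N fc hfcc hno p hp hint' hzero' x hx
  rwa [hfceq x hx] at h
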